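/- Let K/ℚ be Galois with group G and α a primitive element of K, δ = |G|^{-1}∑_g g, and V = span{g - δ : g ∈ G} ⊆ ℂ[G]. For M ∈ ℚ[G], one has M[α] ∈ ℚ (where M[α] = ∑ m_g g(α)) if and only if M·(∑_{g∈G} g(α) g^{-1})·V = 0. -/

import Mathlib

section aux
open MonoidAlgebra
variable {G : Type*} [Group G] [Fintype G] [DecidableEq G]

lemma aux_eval_sum_single (c : G → ℂ) (j : G) :
    (∑ k : G, MonoidAlgebra.single k (c k)).coeff j = c j := by
  rw [MonoidAlgebra.coeff_sum, Finsupp.finset_sum_apply]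
  simp [MonoidAlgebra.coeff_single, Finsupp.single_apply]

lemma aux_sum_single_mul (c : G → ℂ) (g : G) :
    (∑ k : G, MonoidAlgebra.single k (c k)) * MonoidAlgebra.single g (1 : ℂ)
      = ∑ k : G, MonoidAlgebra.single k (c (k * g⁻¹)) := by
  rw [Finset.sum_mul]
  simp only [MonoidAlgebra.single_mul_single, mul_one]
  exact Fintype.sum_equiv (Equiv.mulRight g) _ _ (by simp)

lemma aux_prod (a b : G → ℂ) :
    (∑ h : G, MonoidAlgebra.single h (a h)) * (∑ g : G, MonoidAlgebra.single g⁻¹ (b g))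
      = ∑ k : G, MonoidAlgebra.single k (∑ g : G, a (k * g) * b g) := by
  rw [Finset.sum_mul_sum]
  simp only [MonoidAlgebra.single_mul_single]
  rw [Finset.sum_comm]
  have : ∀ g : G, (∑ h : G, MonoidAlgebra.single (h * g⁻¹) (a h * b g))
      = ∑ k : G, MonoidAlgebra.single k (a (k * g) * b g) := fun g =>
    (Fintype.sum_equiv (Equiv.mulRight g) _ _ (by simp)).symm
  simp only [this]
  rw [Finset.sum_comm]
  simp only [← MonoidAlgebra.coeff_inj, MonoidAlgebra.coeff_sum, MonoidAlgebra.coeff_single,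
    Finsupp.single_finset_sum]

lemma aux_key (c : G → ℂ) (δ : MonoidAlgebra ℂ G)
    (hδ : δ = (Fintype.card G : ℂ)⁻¹ • ∑ g : G, MonoidAlgebra.single g (1 : ℂ)) :
    (∀ v ∈ Submodule.span ℂ {v | ∃ g : G, v = MonoidAlgebra.single g (1 : ℂ) - δ},
        (∑ k : G, MonoidAlgebra.single k (c k)) * v = 0) ↔ ∀ k : G, c k = c 1 := by
  set P : MonoidAlgebra ℂ G := ∑ k : G, MonoidAlgebra.single k (c k) with hP
  have hPδ : P * δ = (Fintype.card G : ℂ)⁻¹ • ∑ g : G, P * MonoidAlgebra.single g (1 : ℂ) := by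
    rw [hδ, mul_smul_comm, Finset.mul_sum]
  constructor
  · intro h k
    have hg : ∀ g : G, P * MonoidAlgebra.single g (1 : ℂ) = P * δ := fun g => by
      have := h _ (Submodule.subset_span ⟨g, rfl⟩)
      rwa [mul_sub, sub_eq_zero] at this
    have h2 : P * MonoidAlgebra.single (k⁻¹) (1 : ℂ) = P * MonoidAlgebra.single 1 (1 : ℂ) := by
      rw [hg, hg]
    rw [aux_sum_single_mul, aux_sum_single_mul] at h2
    have h3 := congrArg (fun x : MonoidAlgebra ℂ G => x.coeff 1) h2
    simp only [aux_eval_sum_single] at h3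
    simpa using h3
  · intro hconst
    have hg : ∀ g : G, P * MonoidAlgebra.single g (1 : ℂ) = P := fun g => by
      rw [aux_sum_single_mul]
      exact Finset.sum_congr rfl fun k _ => by rw [hconst, hconst k]
    have hcard : (Fintype.card G : ℂ) ≠ 0 := by
      exact_mod_cast Fintype.card_ne_zero
    have hPd : P * δ = P := by
      rw [hPδ]
      simp only [hg]
      rw [Finset.sum_const, Finset.card_univ, ← Nat.cast_smul_eq_nsmul ℂ, smul_smul,
        inv_mul_cancel₀ hcard, one_smul]
    intro v hv
    have hsub : {v | ∃ g : G, v = MonoidAlgebra.single g (1 : ℂ) - δ}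
        ⊆ (LinearMap.ker (LinearMap.mulLeft ℂ P) : Set (MonoidAlgebra ℂ G)) := by
      rintro _ ⟨g, rfl⟩
      simp only [SetLike.mem_coe, LinearMap.mem_ker, LinearMap.mulLeft_apply]
      rw [mul_sub, hg, hPd, sub_self]
    have := Submodule.span_le.mpr hsub hv
    simpa using this
end aux

theorem stmt_9 (K₀ : IntermediateField ℚ ℂ) [FiniteDimensional ℚ ↥K₀] [IsGalois ℚ ↥K₀]
    (α : ↥K₀) (hα : IntermediateField.adjoin ℚ {α} = ⊤)
    (δ : MonoidAlgebra ℂ (↥K₀ ≃ₐ[ℚ] ↥K₀))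
    (hδ : δ = (Fintype.card (↥K₀ ≃ₐ[ℚ] ↥K₀) : ℂ)⁻¹ •
      ∑ g : ↥K₀ ≃ₐ[ℚ] ↥K₀, MonoidAlgebra.single g (1 : ℂ))
    (V : Submodule ℂ (MonoidAlgebra ℂ (↥K₀ ≃ₐ[ℚ] ↥K₀)))
    (hV : V = Submodule.span ℂ
      {v | ∃ g : ↥K₀ ≃ₐ[ℚ] ↥K₀, v = MonoidAlgebra.single g (1 : ℂ) - δ})
    (m : (↥K₀ ≃ₐ[ℚ] ↥K₀) → ℚ) :
    (∃ q : ℚ, ∑ h : ↥K₀ ≃ₐ[ℚ] ↥K₀, (m h : ℂ) * ((h α : ↥K₀) : ℂ) = (q : ℂ))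
    ↔ ∀ v ∈ V,
        ((∑ h : ↥K₀ ≃ₐ[ℚ] ↥K₀, MonoidAlgebra.single h ((m h : ℂ)))
          * (∑ g : ↥K₀ ≃ₐ[ℚ] ↥K₀, MonoidAlgebra.single (g⁻¹) ((g α : ↥K₀) : ℂ))
          * v : MonoidAlgebra ℂ (↥K₀ ≃ₐ[ℚ] ↥K₀)) = 0 := by
  classical
  set s : ↥K₀ := ∑ h : ↥K₀ ≃ₐ[ℚ] ↥K₀, (m h) • (h α) with hs
  have hcoeff : ∀ k : ↥K₀ ≃ₐ[ℚ] ↥K₀,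
      (∑ g : ↥K₀ ≃ₐ[ℚ] ↥K₀, (m (k * g) : ℂ) * ((g α : ↥K₀) : ℂ))
        = (((k⁻¹ s : ↥K₀) : ℂ)) := by
    intro k
    have h1 : k⁻¹ s = ∑ g : ↥K₀ ≃ₐ[ℚ] ↥K₀, m (k * g) • (g α) := by
      rw [hs, map_sum]
      refine Fintype.sum_equiv (Equiv.mulLeft k⁻¹) _ _ ?_
      intro g
      simp [Rat.smul_def, map_mul, AlgEquiv.mul_apply]
    rw [h1]
    push_cast [Rat.smul_def]
    rfl
  rw [hV]
  have hprod := aux_prod (G := ↥K₀ ≃ₐ[ℚ] ↥K₀)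
    (fun h => (m h : ℂ)) (fun g => ((g α : ↥K₀) : ℂ))
  simp only [hprod, hcoeff]
  rw [aux_key _ δ hδ]
  have hsum1 : (∑ h : ↥K₀ ≃ₐ[ℚ] ↥K₀, (m h : ℂ) * ((h α : ↥K₀) : ℂ))
      = ((s : ↥K₀) : ℂ) := by
    have := hcoeff 1
    simpa using this
  rw [hsum1]
  constructor
  · rintro ⟨q, hq⟩ k
    have hsq : s = (q : ↥K₀) := by
      apply Subtype.coe_injective
      show (↑s : ℂ) = (↑((q : ↥K₀)) : ℂ)
      rw [hq]
      norm_cast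
    rw [hsq]
    simp [map_ratCast]
  · intro h
    have hfixed : ∀ σ : (↥K₀ ≃ₐ[ℚ] ↥K₀), σ s = s := by
      intro σ
      have := h σ⁻¹
      simp only [inv_inv, inv_one, AlgEquiv.one_apply] at this
      apply Subtype.coe_injective
      show (↑(σ s) : ℂ) = (↑s : ℂ)
      simpa using this
    have hbot : IntermediateField.fixedField (⊤ : Subgroup (↥K₀ ≃ₐ[ℚ] ↥K₀)) = ⊥ := by
      have h01 := (@IsGalois.tfae ℚ _ ↥K₀ _ _ _).out 0 1
      exact h01.mp inferInstance
    have hmem : s ∈ IntermediateField.fixedField (⊤ : Subgroup (↥K₀ ≃ₐ[ℚ] ↥K₀)) := by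
      intro σ
      exact hfixed σ
    rw [hbot, IntermediateField.mem_bot] at hmem
    obtain ⟨q, hq⟩ := hmem
    refine ⟨q, ?_⟩
    rw [← hq]
    have : algebraMap ℚ ↥K₀ q = (q : ↥K₀) := by
      exact eq_ratCast (algebraMap ℚ ↥K₀) q
    rw [this]
    push_cast
    ring
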